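/- Let K ≥ 2 be an integer, let ℓ ∈ {0,…,K−1} and j ∈ {1,…,K−1}, and let f be any real-valued function on pairs (k, W) with k ∈ {1,…,K} and W ⊆ {1,…,K}\{k}, |W| = ℓ. Then ∑_{σ ∈ S_K} [ ∑_{W ⊆ {1,…,K}\{σ(j)}, |W| = ℓ} f(σ(j), W) − ∑_{W ⊆ {σ(1),…,σ(j−1)}, |W| = ℓ} f(σ(j), W) ] = (K−1)!·(1 − C(j−1, ℓ)/C(K−1, ℓ))·∑_{k=1}^{K} ∑_{W ⊆ {1,…,K}\{k}, |W| = ℓ} f(k, W), where S_K is the set of all permutations of {1,…,K} and C(n, r) denotes the binomial coefficient. -/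

import Mathlib

open Finset

section aux

variable {α : Type*} [Fintype α] [DecidableEq α]

private lemma subtypeCongr_pos {p q : α → Prop} [DecidablePred p] [DecidablePred q]
    (e : {x // p x} ≃ {x // q x}) (g : {x // ¬p x} ≃ {x // ¬q x}) (a : α) (h : p a) :
    Equiv.subtypeCongr e g a = (e ⟨a, h⟩ : α) := by
  simp [Equiv.subtypeCongr, h]

private lemma subtypeCongr_neg {p q : α → Prop} [DecidablePred p] [DecidablePred q]
    (e : {x // p x} ≃ {x // q x}) (g : {x // ¬p x} ≃ {x // ¬q x}) (a : α) (h : ¬ p a) :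
    Equiv.subtypeCongr e g a = (g ⟨a, h⟩ : α) := by
  simp [Equiv.subtypeCongr, h]

private lemma aux_exists_perm (p p' : α) (V V' : Finset α) (hp : p ∉ V) (hp' : p' ∉ V')
    (h : V.card = V'.card) : ∃ τ : Equiv.Perm α, τ p = p' ∧ V.image τ = V' := by
  classical
  have hc : Fintype.card {x // x ∈ V} = Fintype.card {x // x ∈ V'} := by
    simpa [Fintype.card_coe] using h
  let e : {x // x ∈ V} ≃ {x // x ∈ V'} := Fintype.equivOfCardEq hc
  have hc2 : Fintype.card {x // ¬ x ∈ V} = Fintype.card {x // ¬ x ∈ V'} := by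
    rw [Fintype.card_subtype_compl, Fintype.card_subtype_compl, hc]
  let g0 : {x // ¬ x ∈ V} ≃ {x // ¬ x ∈ V'} := Fintype.equivOfCardEq hc2
  let g : {x // ¬ x ∈ V} ≃ {x // ¬ x ∈ V'} :=
    g0.trans (Equiv.swap (g0 ⟨p, hp⟩) ⟨p', hp'⟩)
  refine ⟨Equiv.subtypeCongr e g, ?_, ?_⟩
  · rw [subtypeCongr_neg e g p hp]
    show ((Equiv.swap (g0 ⟨p, hp⟩) ⟨p', hp'⟩) (g0 ⟨p, hp⟩) : α) = p'
    rw [Equiv.swap_apply_left]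
  · apply Finset.eq_of_subset_of_card_le
    · intro y hy
      rcases Finset.mem_image.1 hy with ⟨x, hx, rfl⟩
      rw [subtypeCongr_pos e g x hx]
      exact (e ⟨x, hx⟩).2
    · rw [Finset.card_image_of_injective _ (Equiv.subtypeCongr e g).injective, h]

private lemma aux_s_eq (f : α → Finset α → ℝ) (p p' : α) (V V' : Finset α)
    (hp : p ∉ V) (hp' : p' ∉ V') (h : V.card = V'.card) :
    ∑ σ : Equiv.Perm α, f (σ p) (V.image σ) = ∑ σ : Equiv.Perm α, f (σ p') (V'.image σ) := by
  obtain ⟨τ, hτp, hτV⟩ := aux_exists_perm p p' V V' hp hp' h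
  refine Fintype.sum_equiv (Equiv.mulRight τ⁻¹) _ _ (fun σ => ?_)
  show f (σ p) (V.image σ) = f ((σ * τ⁻¹) p') (V'.image (σ * τ⁻¹))
  have h1 : (σ * τ⁻¹) p' = σ p := by
    rw [Equiv.Perm.mul_apply, ← hτp, Equiv.Perm.coe_inv, Equiv.symm_apply_apply]
  have h2 : V'.image ⇑(σ * τ⁻¹) = V.image ⇑σ := by
    rw [← hτV, Finset.image_image]
    refine Finset.image_congr (fun x _ => ?_)
    simp [Equiv.Perm.mul_apply]
  rw [h1, h2]

private lemma aux_pc_image (σ : Equiv.Perm α) (S : Finset α) (g : Finset α → ℝ) (ℓ : ℕ) :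
    ∑ W ∈ (S.image σ).powersetCard ℓ, g W = ∑ V ∈ S.powersetCard ℓ, g (V.image σ) := by
  have h : S.image ⇑σ = S.map σ.toEmbedding := by
    rw [Finset.map_eq_image]; rfl
  rw [h, Finset.powersetCard_map, Finset.sum_map]
  refine Finset.sum_congr rfl (fun V _ => ?_)
  congr 1
  show Finset.mapEmbedding σ.toEmbedding V = V.image ⇑σ
  rw [Finset.mapEmbedding_apply, Finset.map_eq_image]; rfl

private lemma aux_image_sdiff_univ (σ : Equiv.Perm α) (q : α) :
    (Finset.univ \ {q}).image σ = Finset.univ \ {σ q} := by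
  rw [Finset.image_sdiff _ _ σ.injective, Finset.image_singleton,
    Finset.image_univ_equiv]

end aux

private lemma main_aux (K : ℕ) (hK : 1 ≤ K) (ℓ : ℕ) (hℓ : ℓ ≤ K - 1)
    (p : Fin K) (S : Finset (Fin K)) (hpS : p ∉ S)
    (f : Fin K → Finset (Fin K) → ℝ) :
    ∑ σ : Equiv.Perm (Fin K),
      ((∑ W ∈ (Finset.univ \ {σ p}).powersetCard ℓ, f (σ p) W) -
        ∑ W ∈ (S.image σ).powersetCard ℓ, f (σ p) W) =
    ((K - 1).factorial : ℝ) * (1 - (S.card.choose ℓ : ℝ) / ((K - 1).choose ℓ : ℝ)) *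
      ∑ k : Fin K, ∑ W ∈ (Finset.univ \ {k}).powersetCard ℓ, f k W := by
  classical
  set T : ℝ := ∑ k : Fin K, ∑ W ∈ (Finset.univ \ {k}).powersetCard ℓ, f k W with hT
  have hCpos : 0 < (K - 1).choose ℓ := Nat.choose_pos hℓ
  have hCne : ((K - 1).choose ℓ : ℝ) ≠ 0 := by positivity
  have hcard_sdiff : ∀ q : Fin K, (Finset.univ \ ({q} : Finset (Fin K))).card = K - 1 := by
    intro q
    rw [Finset.card_sdiff_of_subset (by simp), Finset.card_singleton, Finset.card_univ, Fintype.card_fin]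
  -- the key value of the symmetrized sum
  have key : ∀ (q : Fin K) (V : Finset (Fin K)), q ∉ V → V.card = ℓ →
      (∑ σ : Equiv.Perm (Fin K), f (σ q) (V.image σ))
        = ((K - 1).factorial : ℝ) * T / ((K - 1).choose ℓ : ℝ) := by
    intro q V hqV hVcard
    have total1 : (∑ q' : Fin K, ∑ V' ∈ (Finset.univ \ {q'}).powersetCard ℓ,
          ∑ σ : Equiv.Perm (Fin K), f (σ q') (V'.image σ))
        = (K * (K - 1).choose ℓ) • ∑ σ : Equiv.Perm (Fin K), f (σ q) (V.image σ) := by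
      have e1 : ∀ q' : Fin K, (∑ V' ∈ (Finset.univ \ {q'}).powersetCard ℓ,
            ∑ σ : Equiv.Perm (Fin K), f (σ q') (V'.image σ))
          = ((K - 1).choose ℓ) • ∑ σ : Equiv.Perm (Fin K), f (σ q) (V.image σ) := by
        intro q'
        have e2 : ∀ V' ∈ (Finset.univ \ {q'}).powersetCard ℓ,
            (∑ σ : Equiv.Perm (Fin K), f (σ q') (V'.image σ))
              = ∑ σ : Equiv.Perm (Fin K), f (σ q) (V.image σ) := by
          intro V' hV'
          rw [Finset.mem_powersetCard] at hV'
          exact aux_s_eq f q' q V' V (fun h => by simpa using hV'.1 h) hqV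
            (hV'.2.trans hVcard.symm)
        rw [Finset.sum_congr rfl e2, Finset.sum_const, Finset.card_powersetCard, hcard_sdiff]
      rw [Finset.sum_congr rfl (fun q' _ => e1 q'), Finset.sum_const, Finset.card_univ,
        Fintype.card_fin, smul_smul]
    have total2 : (∑ q' : Fin K, ∑ V' ∈ (Finset.univ \ {q'}).powersetCard ℓ,
          ∑ σ : Equiv.Perm (Fin K), f (σ q') (V'.image σ))
        = (Fintype.card (Equiv.Perm (Fin K))) • T := by
      have step1a : ∀ q' : Fin K, (∑ V' ∈ (Finset.univ \ {q'}).powersetCard ℓ,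
            ∑ σ : Equiv.Perm (Fin K), f (σ q') (V'.image σ))
          = ∑ σ : Equiv.Perm (Fin K), ∑ V' ∈ (Finset.univ \ {q'}).powersetCard ℓ,
              f (σ q') (V'.image σ) := fun q' => Finset.sum_comm
      rw [Finset.sum_congr rfl (fun q' _ => step1a q')]
      rw [Finset.sum_comm]
      have inner : ∀ σ : Equiv.Perm (Fin K),
          (∑ q' : Fin K, ∑ V' ∈ (Finset.univ \ {q'}).powersetCard ℓ, f (σ q') (V'.image σ))
            = T := by
        intro σ
        have inner1 : ∀ q' : Fin K,
            (∑ V' ∈ (Finset.univ \ {q'}).powersetCard ℓ, f (σ q') (V'.image σ))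
              = ∑ W ∈ (Finset.univ \ {σ q'}).powersetCard ℓ, f (σ q') W := by
          intro q'
          rw [← aux_image_sdiff_univ σ q', aux_pc_image]
        rw [Finset.sum_congr rfl (fun q' _ => inner1 q'), hT]
        exact Equiv.sum_comp σ
          (fun k => ∑ W ∈ (Finset.univ \ {k}).powersetCard ℓ, f k W)
      rw [Finset.sum_congr rfl (fun σ _ => inner σ), Finset.sum_const, Finset.card_univ]
    have hKne : (K : ℝ) ≠ 0 := by positivity
    have hKfac : (K.factorial : ℝ) = (K : ℝ) * ((K - 1).factorial : ℝ) := by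
      obtain ⟨K', rfl⟩ : ∃ K', K = K' + 1 := ⟨K - 1, by omega⟩
      rw [Nat.factorial_succ]
      push_cast [Nat.add_sub_cancel]
      ring
    have heq : ((K * (K - 1).choose ℓ : ℕ) : ℝ) *
          (∑ σ : Equiv.Perm (Fin K), f (σ q) (V.image σ))
        = ((Fintype.card (Equiv.Perm (Fin K)) : ℕ) : ℝ) * T := by
      rw [← nsmul_eq_mul, ← nsmul_eq_mul, ← total1, ← total2]
    rw [Fintype.card_perm, Fintype.card_fin] at heq
    push_cast at heq
    rw [hKfac] at heq
    have heq2 : ((K - 1).choose ℓ : ℝ) * (∑ σ : Equiv.Perm (Fin K), f (σ q) (V.image σ))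
        = ((K - 1).factorial : ℝ) * T := by
      apply mul_left_cancel₀ hKne
      rw [← mul_assoc, ← mul_assoc]
      exact heq
    rw [eq_div_iff hCne, mul_comm _ (((K - 1).choose ℓ : ℝ))]
    exact heq2
  -- now compute the two parts of the LHS
  rw [Finset.sum_sub_distrib]
  have partA : (∑ σ : Equiv.Perm (Fin K),
      ∑ W ∈ (Finset.univ \ {σ p}).powersetCard ℓ, f (σ p) W)
        = ((K - 1).factorial : ℝ) * T := by
    have h1 : ∀ σ : Equiv.Perm (Fin K),
        (∑ W ∈ (Finset.univ \ {σ p}).powersetCard ℓ, f (σ p) W)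
          = ∑ V ∈ (Finset.univ \ {p}).powersetCard ℓ, f (σ p) (V.image σ) := by
      intro σ
      rw [← aux_image_sdiff_univ σ p, aux_pc_image]
    rw [Finset.sum_congr rfl (fun σ _ => h1 σ), Finset.sum_comm]
    have h2 : ∀ V ∈ (Finset.univ \ {p}).powersetCard ℓ,
        (∑ σ : Equiv.Perm (Fin K), f (σ p) (V.image σ))
          = ((K - 1).factorial : ℝ) * T / ((K - 1).choose ℓ : ℝ) := by
      intro V hV
      rw [Finset.mem_powersetCard] at hV
      exact key p V (fun h => by simpa using hV.1 h) hV.2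
    rw [Finset.sum_congr rfl h2, Finset.sum_const, Finset.card_powersetCard, hcard_sdiff,
      nsmul_eq_mul]
    field_simp
  have partB : (∑ σ : Equiv.Perm (Fin K),
      ∑ W ∈ (S.image σ).powersetCard ℓ, f (σ p) W)
        = (S.card.choose ℓ : ℝ) *
            (((K - 1).factorial : ℝ) * T / ((K - 1).choose ℓ : ℝ)) := by
    rw [Finset.sum_congr rfl (fun σ _ => aux_pc_image σ S (f (σ p)) ℓ), Finset.sum_comm]
    have h2 : ∀ V ∈ S.powersetCard ℓ,
        (∑ σ : Equiv.Perm (Fin K), f (σ p) (V.image σ))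
          = ((K - 1).factorial : ℝ) * T / ((K - 1).choose ℓ : ℝ) := by
      intro V hV
      rw [Finset.mem_powersetCard] at hV
      exact key p V (fun h => hpS (hV.1 h)) hV.2
    rw [Finset.sum_congr rfl h2, Finset.sum_const, Finset.card_powersetCard, nsmul_eq_mul]
  rw [partA, partB]
  field_simp

/-- Symmetrization identity over all `K!` permutations used in the converse proof of the
data shuffling lower bound.  Workers `{1,…,K}` are encoded as `Fin K`; the position
`j ∈ {1,…,K−1}` is encoded as the index `j - 1 : Fin K`, and `{σ(1),…,σ(j−1)}` is the
image under `σ` of the first `j−1` positions. -/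
theorem perm_symmetrization_identity (K : ℕ) (hK : 2 ≤ K) (ℓ j : ℕ)
    (hℓ : ℓ ≤ K - 1) (hj1 : 1 ≤ j) (hj2 : j ≤ K - 1)
    (f : Fin K → Finset (Fin K) → ℝ) :
    ∑ σ : Equiv.Perm (Fin K),
      ((∑ W ∈ (Finset.univ \ {σ ⟨j - 1, by omega⟩}).powersetCard ℓ,
          f (σ ⟨j - 1, by omega⟩) W) -
        ∑ W ∈ ((Finset.univ.filter (fun i : Fin K => (i : ℕ) + 1 < j)).image σ).powersetCard ℓ,
          f (σ ⟨j - 1, by omega⟩) W) =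
    ((K - 1).factorial : ℝ) *
        (1 - ((j - 1).choose ℓ : ℝ) / ((K - 1).choose ℓ : ℝ)) *
      ∑ k : Fin K, ∑ W ∈ (Finset.univ \ {k}).powersetCard ℓ, f k W := by
  classical
  have hjK : j - 1 < K := by omega
  have hpS : (⟨j - 1, hjK⟩ : Fin K) ∉ Finset.univ.filter (fun i : Fin K => (i : ℕ) + 1 < j) := by
    simp only [Finset.mem_filter, Finset.mem_univ, true_and]
    omega
  have hcard : (Finset.univ.filter (fun i : Fin K => (i : ℕ) + 1 < j)).card = j - 1 := by
    rw [← Finset.card_range (j - 1)]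
    apply Finset.card_bij (fun (i : Fin K) _ => (i : ℕ))
    · intro a ha
      simp only [Finset.mem_filter, Finset.mem_univ, true_and] at ha
      simp only [Finset.mem_range]; omega
    · intro a _ b _ h
      exact Fin.val_injective h
    · intro b hb
      simp only [Finset.mem_range] at hb
      exact ⟨⟨b, by omega⟩, by simp only [Finset.mem_filter, Finset.mem_univ, true_and]; omega,
        rfl⟩
  have := main_aux K (by omega) ℓ hℓ ⟨j - 1, hjK⟩
    (Finset.univ.filter (fun i : Fin K => (i : ℕ) + 1 < j)) hpS f
  rw [hcard] at this
  exact this
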